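/- Let H be a self-adjoint operator on a Hilbert space, I a compact interval, s ≥ 0, and suppose the limiting absorption principle sup_{Re z ∈ I, Im z ≠ 0} ‖⟨Q⟩^{-s}(H-z)^{-1}⟨Q⟩^{-s}‖ < ∞ holds for a self-adjoint operator Q. Then for every weighted Weyl sequence (f_n, z_n): f_n = E_I(H) f_n in the domain of H, Im z_n ≠ 0, Re z_n ∈ I, Im z_n → 0, (H - z_n)f_n in the domain of ⟨Q⟩^s with ‖⟨Q⟩^s (H - z_n) f_n‖ → 0, and ‖⟨Q⟩^{-s} f_n‖ → η, one has η = 0. -/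
import Mathlib


open Filter

/-- One direction of the weighted-Weyl-sequence characterization of the LAP:
if the LAP holds on `I` with weight `W` (playing the role of `⟨Q⟩^{-s}`), then
every weighted Weyl sequence has zero mass. Here `Res z` is the resolvent
`(H - z)⁻¹`, `EI` the spectral projection of `H` on `I`, and membership of
`(H - z_n) f_n` in the domain of `⟨Q⟩^s` is expressed by `(H - z_n) f_n = W g_n`. -/
theorem weyl_sequence_mass_zero_of_lap
    {E : Type*} [NormedAddCommGroup E] [InnerProductSpace ℂ E] [CompleteSpace E]
    (H W EI : E →L[ℂ] E) (hH : IsSelfAdjoint H) (hW : IsSelfAdjoint W)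
    (I : Set ℝ) (hI : IsCompact I) (s : ℝ) (hs : 0 ≤ s)
    (hEproj : EI ∘L EI = EI) (hEsa : IsSelfAdjoint EI)
    (Res : ℂ → E →L[ℂ] E)
    (hRes : ∀ z : ℂ, z.im ≠ 0 →
      (H - z • (1 : E →L[ℂ] E)) ∘L Res z = 1 ∧
      Res z ∘L (H - z • (1 : E →L[ℂ] E)) = 1)
    (hLAP : ∃ C : ℝ, ∀ z : ℂ, z.re ∈ I → z.im ≠ 0 →
      ‖W ∘L Res z ∘L W‖ ≤ C)
    (f : ℕ → E) (z : ℕ → ℂ) (g : ℕ → E)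
    (hEf : ∀ n, EI (f n) = f n)
    (hzre : ∀ n, (z n).re ∈ I) (hzim : ∀ n, (z n).im ≠ 0)
    (hzim0 : Tendsto (fun n => (z n).im) atTop (nhds 0))
    (hg : ∀ n, H (f n) - z n • f n = W (g n))
    (hg0 : Tendsto (fun n => ‖g n‖) atTop (nhds 0))
    (η : ℝ) (hη : Tendsto (fun n => ‖W (f n)‖) atTop (nhds η)) :
    η = 0 := by
  obtain ⟨C, hC⟩ := hLAP
  have key : ∀ n, ‖W (f n)‖ ≤ C * ‖g n‖ := by
    intro n
    have h1 := (hRes (z n) (hzim n)).2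
    have hfn : f n = Res (z n) (W (g n)) := by
      have := congrArg (fun T : E →L[ℂ] E => T (f n)) h1
      simp only [ContinuousLinearMap.coe_comp', Function.comp_apply,
        ContinuousLinearMap.sub_apply, ContinuousLinearMap.smul_apply,
        ContinuousLinearMap.one_apply] at this
      rw [hg n] at this
      exact this.symm
    have : W (f n) = (W ∘L Res (z n) ∘L W) (g n) := by
      rw [hfn]; rfl
    rw [this]
    calc ‖(W ∘L Res (z n) ∘L W) (g n)‖ ≤ ‖W ∘L Res (z n) ∘L W‖ * ‖g n‖ :=
          (W ∘L Res (z n) ∘L W).le_opNorm (g n)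
      _ ≤ C * ‖g n‖ := by
          exact mul_le_mul_of_nonneg_right (hC (z n) (hzre n) (hzim n)) (norm_nonneg _)
  have hlim : Tendsto (fun n => ‖W (f n)‖) atTop (nhds 0) := by
    have hupper : Tendsto (fun n => C * ‖g n‖) atTop (nhds 0) := by
      have := hg0.const_mul C
      simpa using this
    exact squeeze_zero (fun n => norm_nonneg _) key hupper
  exact tendsto_nhds_unique hη hlim
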